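/- Let $U: \mathbb{R} \to \mathbb{R}$ be continuously differentiable with $\int_{\mathbb{R}} e^{-U(x)}\,dx < \infty$, and suppose $U', U''$ exist and all integrals below converge absolutely. Define the kernel density $K(x,y) = (U'(2y-x))_+ e^{-\int_0^{2(y-x)}(U'(x+t))_+\,dt}\,\mathbb{1}_{\{y>x\}} + (-U'(2y-x))_+ e^{-\int_0^{2(x-y)}(-U'(x-t))_+\,dt}\,\mathbb{1}_{\{y<x\}}$. Then the density $\pi(x) \propto e^{-U(x)}$ satisfies $\pi(y) = \int_{-\infty}^{\infty} K(x,y)\pi(x)\,dx$ for all $y \in \mathbb{R}$. -/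

import Mathlib

open MeasureTheory Set Filter

/-- Theorem 3.1: the density proportional to `exp (-U)` is stationary for the kernel of the
main sampler. -/
theorem main_sampler_stationarity
    (U : ℝ → ℝ) (hU : ContDiff ℝ 2 U)
    (hint : Integrable (fun x => Real.exp (-U x)))
    (K : ℝ → ℝ → ℝ)
    (hK : ∀ x y, K x y =
      (if x < y then
        max (deriv U (2 * y - x)) 0 *
          Real.exp (-(∫ t in (0:ℝ)..(2 * (y - x)), max (deriv U (x + t)) 0))
       else 0)
      +
      (if y < x then
        max (-(deriv U (2 * y - x))) 0 *
          Real.exp (-(∫ t in (0:ℝ)..(2 * (x - y)), max (-(deriv U (x - t))) 0))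
       else 0))
    (hKint : ∀ y, Integrable (fun x => K x y * Real.exp (-U x))) :
    ∀ y : ℝ, Real.exp (-U y) = ∫ x : ℝ, K x y * Real.exp (-U x) := by
  intro y
  have hUdiff : Differentiable ℝ U := hU.differentiable (by norm_num)
  have hfc : Continuous (deriv U) := hU.continuous_deriv one_le_two
  set g : ℝ → ℝ := fun s => max (deriv U s) 0 with hg
  set gm : ℝ → ℝ := fun s => max (-(deriv U s)) 0 with hgm
  have hgc : Continuous g := hfc.max continuous_const
  have hgmc : Continuous gm := hfc.neg.max continuous_const
  have hg0 : ∀ s, 0 ≤ g s := fun s => le_max_right _ _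
  have hgm0 : ∀ s, 0 ≤ gm s := fun s => le_max_right _ _
  set F : ℝ → ℝ := fun w => ∫ s in (0:ℝ)..w, g s with hF
  set Fm : ℝ → ℝ := fun w => ∫ s in (0:ℝ)..w, gm s with hFm
  set G : ℝ → ℝ := fun u => Real.exp (-(U u) - (F (2*y - u) - F u)) with hG
  -- basic facts about F, Fm
  have hFd : ∀ w, HasDerivAt F (g w) w := fun w =>
    intervalIntegral.integral_hasDerivAt_right (hgc.intervalIntegrable _ _)
      (hgc.stronglyMeasurableAtFilter _ _) hgc.continuousAt
  have hFsub : ∀ a b : ℝ, (∫ s in a..b, g s) = F b - F a := fun a b =>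
    (intervalIntegral.integral_interval_sub_left (hgc.intervalIntegrable 0 b)
      (hgc.intervalIntegrable 0 a)).symm
  have hFmsub : ∀ a b : ℝ, (∫ s in a..b, gm s) = Fm b - Fm a := fun a b =>
    (intervalIntegral.integral_interval_sub_left (hgmc.intervalIntegrable 0 b)
      (hgmc.intervalIntegrable 0 a)).symm
  have hggm : ∀ s, g s - gm s = deriv U s := by
    intro s
    simp only [hg, hgm]
    rcases le_total (deriv U s) 0 with h | h
    · rw [max_eq_right h, max_eq_left (neg_nonneg.mpr h)]; ring
    · rw [max_eq_left h, max_eq_right (neg_nonpos.mpr h)]; ring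
  have hFFm : ∀ w : ℝ, F w - Fm w = U w - U 0 := by
    intro w
    have h1 : F w - Fm w = ∫ s in (0:ℝ)..w, (g s - gm s) :=
      (intervalIntegral.integral_sub (hgc.intervalIntegrable _ _)
        (hgmc.intervalIntegrable _ _)).symm
    rw [h1, intervalIntegral.integral_congr (fun s _ => hggm s)]
    exact intervalIntegral.integral_deriv_eq_sub (fun x _ => hUdiff x)
      (hfc.intervalIntegrable _ _)
  have hGpos : ∀ u, 0 < G u := fun u => Real.exp_pos _
  -- derivative of G
  have hGd : ∀ u, HasDerivAt G ((gm u + g (2*y - u)) * G u) u := by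
    intro u
    have h1 : HasDerivAt (fun u : ℝ => F (2*y - u)) (-(g (2*y - u))) u := by
      have h := (hFd (2*y - u)).comp u ((hasDerivAt_id u).const_sub (2*y))
      simpa [Function.comp_def] using h
    have h2 : HasDerivAt (fun u => -(U u) - (F (2*y - u) - F u))
        (-(deriv U u) - ((-(g (2*y - u))) - g u)) u :=
      ((hUdiff u).hasDerivAt.neg).sub (h1.sub (hFd u))
    have h3 := h2.exp
    convert h3 using 1
    have h4 : gm u = g u - deriv U u := by have := hggm u; linarith
    simp only [hG]
    rw [h4]; ring
  have hGmono : Monotone G := by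
    have hdiff : Differentiable ℝ G := fun u => (hGd u).differentiableAt
    refine monotone_of_deriv_nonneg hdiff fun u => ?_
    rw [(hGd u).deriv]
    exact mul_nonneg (add_nonneg (hgm0 u) (hg0 _)) (hGpos u).le
  -- limit at -∞ is 0
  have hGbdd : BddBelow (range G) := ⟨0, by rintro _ ⟨u, rfl⟩; exact (hGpos u).le⟩
  have hinf0 : (⨅ u, G u) = 0 := by
    by_contra h
    have hL : 0 < ⨅ u, G u :=
      lt_of_le_of_ne (le_ciInf fun u => (hGpos u).le) (Ne.symm h)
    have hle : ∀ u ∈ Iic y, (⨅ u, G u) ≤ Real.exp (-U u) := by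
      intro u hu
      refine le_trans (ciInf_le hGbdd u) ?_
      simp only [hG]
      refine Real.exp_le_exp.mpr ?_
      have h0 : (0:ℝ) ≤ F (2*y - u) - F u := by
        rw [← hFsub]
        exact intervalIntegral.integral_nonneg (by simp at hu; linarith)
          (fun s _ => hg0 s)
      linarith
    have hconst : Integrable (fun _ : ℝ => (⨅ u, G u)) (volume.restrict (Iic y)) := by
      refine Integrable.mono' hint.integrableOn aestronglyMeasurable_const ?_
      refine (ae_restrict_iff' measurableSet_Iic).mpr (ae_of_all _ fun u hu => ?_)
      rw [Real.norm_eq_abs, abs_of_pos hL]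
      exact hle u hu
    rw [integrable_const_iff] at hconst
    rcases hconst with h1 | h2
    · exact hL.ne' h1
    · rw [isFiniteMeasure_restrict, Real.volume_Iic] at h2
      exact (h2 rfl)
  have hGtend : Tendsto G atBot (nhds 0) := by
    have := tendsto_atBot_ciInf hGmono hGbdd
    rwa [hinf0] at this
  -- pointwise identities for the kernel
  set Φ : ℝ → ℝ := fun x => K x y * Real.exp (-U x) with hΦ
  have hΦ1 : ∀ x ∈ Iio y, Φ x = g (2*y - x) * G x := by
    intro x hx
    have hx' : x < y := hx
    simp only [hΦ]
    rw [hK x y, if_pos hx', if_neg (not_lt.mpr hx'.le), add_zero]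
    have hinner : (∫ t in (0:ℝ)..(2*(y-x)), max (deriv U (x + t)) 0)
        = F (2*y - x) - F x := by
      rw [intervalIntegral.integral_congr
        (show EqOn (fun t => max (deriv U (x + t)) 0) (fun t => g (t + x)) _ from
          fun t _ => by simp [hg, add_comm])]
      rw [intervalIntegral.integral_comp_add_right g x, hFsub]
      rw [show 2*(y-x) + x = 2*y - x by ring, show (0:ℝ) + x = x by ring]
    rw [hinner]
    simp only [hG]
    rw [mul_assoc, ← Real.exp_add]
    ring_nf
    exact mul_comm _ _
  have hΦ2 : ∀ x ∈ Ioi y, Φ x = gm (2*y - x) * G (2*y - x) := by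
    intro x hx
    have hx' : y < x := hx
    simp only [hΦ]
    rw [hK x y, if_neg (not_lt.mpr hx'.le), if_pos hx', zero_add]
    have hinner : (∫ t in (0:ℝ)..(2*(x-y)), max (-(deriv U (x - t))) 0)
        = Fm x - Fm (2*y - x) := by
      rw [intervalIntegral.integral_congr
        (show EqOn (fun t => max (-(deriv U (x - t))) 0) (fun t => gm (x - t)) _ from
          fun t _ => rfl)]
      rw [intervalIntegral.integral_comp_sub_left gm x, hFmsub]
      rw [show x - 2*(x-y) = 2*y - x by ring, show x - (0:ℝ) = x by ring]
    rw [hinner]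
    simp only [hG]
    rw [mul_assoc, ← Real.exp_add]
    have hexp : -(Fm x - Fm (2*y - x)) + -U x
        = -(U (2*y - x)) - (F (2*y - (2*y - x)) - F (2*y - x)) := by
      have e1 := hFFm x
      have e2 := hFFm (2*y - x)
      rw [show 2*y - (2*y - x) = x by ring]
      linarith
    rw [hexp]
  -- integrability pieces
  have hKy : Integrable Φ := hKint y
  have hI1 : IntegrableOn (fun x => g (2*y - x) * G x) (Iio y) :=
    (hKy.integrableOn).congr_fun hΦ1 measurableSet_Iio
  have hI2 : IntegrableOn (fun x => gm (2*y - x) * G (2*y - x)) (Ioi y) :=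
    (hKy.integrableOn).congr_fun hΦ2 measurableSet_Ioi
  -- reflection: transfer the Ioi-part to Iio
  set ψ : ℝ → ℝ := fun u => gm u * G u with hψ
  have hindeq : (Set.indicator (Ioi y) (fun x => gm (2*y - x) * G (2*y - x)))
      = fun x => Set.indicator (Iio y) ψ (2*y - x) := by
    funext x
    simp only [Set.indicator_apply, mem_Ioi, mem_Iio, hψ]
    by_cases hx : y < x
    · rw [if_pos hx, if_pos (by linarith : 2*y - x < y)]
    · rw [if_neg hx, if_neg (by rw [not_lt] at hx ⊢; linarith)]
  have hIψ : IntegrableOn ψ (Iio y) := by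
    have h1 : Integrable (Set.indicator (Ioi y) (fun x => gm (2*y - x) * G (2*y - x))) :=
      (integrable_indicator_iff measurableSet_Ioi).mpr hI2
    rw [hindeq] at h1
    have h2 : Integrable (Set.indicator (Iio y) ψ) :=
      (integrable_comp_sub_left (Set.indicator (Iio y) ψ) (2*y)).mp h1
    exact (integrable_indicator_iff measurableSet_Iio).mp h2
  have hrefl : (∫ x in Ioi y, gm (2*y - x) * G (2*y - x)) = ∫ u in Iio y, ψ u := by
    rw [← integral_indicator measurableSet_Ioi, hindeq,
      integral_sub_left_eq_self (Set.indicator (Iio y) ψ) volume (2*y),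
      integral_indicator measurableSet_Iio]
  -- integrability of the derivative of G on Iic y
  have hIG' : IntegrableOn (fun u => (gm u + g (2*y - u)) * G u) (Iic y) := by
    rw [integrableOn_Iic_iff_integrableOn_Iio]
    have hsum : IntegrableOn (fun u => ψ u + g (2*y - u) * G u) (Iio y) := hIψ.add hI1
    refine hsum.congr_fun (fun u _ => by simp only [hψ]; ring) measurableSet_Iio
  -- FTC on (-∞, y]
  have hFTC : (∫ u in Iic y, (gm u + g (2*y - u)) * G u) = G y := by
    have := integral_Iic_of_hasDerivAt_of_tendsto' (a := y)
      (f := G) (f' := fun u => (gm u + g (2*y - u)) * G u)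
      (fun x _ => hGd x) hIG' hGtend
    rw [this, sub_zero]
  -- assemble
  have hGy : G y = Real.exp (-U y) := by
    simp only [hG]
    rw [show 2*y - y = y by ring]
    norm_num
  have hsplit : ∫ x, Φ x = (∫ x in Iic y, Φ x) + ∫ x in Ioi y, Φ x :=
    (intervalIntegral.integral_Iic_add_Ioi hKy.integrableOn hKy.integrableOn).symm
  have e1 : (∫ x in Iic y, Φ x) = ∫ x in Iio y, g (2*y - x) * G x := by
    rw [integral_Iic_eq_integral_Iio]
    exact setIntegral_congr_fun measurableSet_Iio hΦ1
  have e2 : (∫ x in Ioi y, Φ x) = ∫ u in Iio y, ψ u := by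
    rw [setIntegral_congr_fun measurableSet_Ioi hΦ2]
    exact hrefl
  have e3 : (∫ x in Iio y, g (2*y - x) * G x) + (∫ u in Iio y, ψ u)
      = ∫ u in Iic y, (gm u + g (2*y - u)) * G u := by
    rw [← integral_add hI1 hIψ, integral_Iic_eq_integral_Iio]
    refine setIntegral_congr_fun measurableSet_Iio fun u _ => ?_
    simp only [hψ]; ring
  calc Real.exp (-U y) = G y := hGy.symm
    _ = ∫ u in Iic y, (gm u + g (2*y - u)) * G u := hFTC.symm
    _ = (∫ x in Iio y, g (2*y - x) * G x) + (∫ u in Iio y, ψ u) := e3.symm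
    _ = (∫ x in Iic y, Φ x) + ∫ x in Ioi y, Φ x := by rw [e1, e2]
    _ = ∫ x, Φ x := hsplit.symm
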